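/- There exists a gap exhibiting non-multiplicativity of entanglement binding: for the qutrit depolarizing channel Φ_q with q = 0.4 ∈ (1/4, (1+√3)/(4+√3)), the Choi operator of Φ_q is not PPT (so Φ_q ⊗ Id is not PPT-inducing), yet (Id ⊗ T)[(Φ_q ⊗ Φ_q)[|ψ⟩⟨ψ|]] ≥ 0 for the maximally entangled rank-2 input |ψ⟩ = (|11⟩+|22⟩)/√2. -/

import Mathlib

open Matrix Kronecker BigOperators ComplexOrder

noncomputable section

/-- A quantum state: positive semidefinite with unit trace. -/
def IsState {ι : Type*} [Fintype ι] (ρ : Matrix ι ι ℂ) : Prop :=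
  ρ.PosSemidef ∧ ρ.trace = 1

/-- Partial transpose on the second tensor factor. -/
def ptB {ι κ : Type*} (ρ : Matrix (ι × κ) (ι × κ) ℂ) : Matrix (ι × κ) (ι × κ) ℂ :=
  Matrix.of fun p q => ρ (p.1, q.2) (q.1, p.2)

/-- Partial transpose on the first tensor factor. -/
def ptA {ι κ : Type*} (ρ : Matrix (ι × κ) (ι × κ) ℂ) : Matrix (ι × κ) (ι × κ) ℂ :=
  Matrix.of fun p q => ρ (q.1, p.2) (p.1, q.2)

/-- The maximally entangled projector |Ψ₊⟩⟨Ψ₊|. -/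
def maxEntProj (ι : Type*) [Fintype ι] [DecidableEq ι] : Matrix (ι × ι) (ι × ι) ℂ :=
  Matrix.of fun p q => if p.1 = p.2 ∧ q.1 = q.2 then (Fintype.card ι : ℂ)⁻¹ else 0

/-- Ampliation Φ ⊗ Id acting on the first factor. -/
def amplify {ι κ : Type*} (Φ : Matrix ι ι ℂ → Matrix ι ι ℂ)
    (M : Matrix (ι × κ) (ι × κ) ℂ) : Matrix (ι × κ) (ι × κ) ℂ :=
  Matrix.of fun p q => Φ (Matrix.of fun i j => M (i, p.2) (j, q.2)) p.1 q.1

/-- Ampliation Id ⊗ Φ acting on the second factor. -/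
def amplifyL {ι κ : Type*} (Φ : Matrix κ κ ℂ → Matrix κ κ ℂ)
    (M : Matrix (ι × κ) (ι × κ) ℂ) : Matrix (ι × κ) (ι × κ) ℂ :=
  Matrix.of fun p q => Φ (Matrix.of fun k l => M (p.1, k) (q.1, l)) p.2 q.2

/-- The tensor product map Φ₁ ⊗ Φ₂. -/
def tensorMap {ι κ : Type*} (Φ₁ : Matrix ι ι ℂ → Matrix ι ι ℂ)
    (Φ₂ : Matrix κ κ ℂ → Matrix κ κ ℂ)
    (M : Matrix (ι × κ) (ι × κ) ℂ) : Matrix (ι × κ) (ι × κ) ℂ :=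
  amplify Φ₁ (amplifyL Φ₂ M)

/-- The Choi operator Ω_Φ = (Φ ⊗ Id)[|Ψ₊⟩⟨Ψ₊|]. -/
def choi {ι : Type*} [Fintype ι] [DecidableEq ι] (Φ : Matrix ι ι ℂ → Matrix ι ι ℂ) :
    Matrix (ι × ι) (ι × ι) ℂ := amplify Φ (maxEntProj ι)

/-- Complete positivity via positivity of all ampliations. -/
def IsCP {ι : Type*} [Fintype ι] (Φ : Matrix ι ι ℂ → Matrix ι ι ℂ) : Prop :=
  ∀ (k : ℕ) (M : Matrix (ι × Fin k) (ι × Fin k) ℂ), M.PosSemidef → (amplify Φ M).PosSemidef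

/-- Partial trace over the second tensor factor. -/
def ptrace2 {ι κ : Type*} [Fintype κ] (M : Matrix (ι × κ) (ι × κ) ℂ) : Matrix ι ι ℂ :=
  Matrix.of fun i j => ∑ k, M (i, k) (j, k)

/-- Product vector u ⊗ v. -/
def prodVec {ι κ : Type*} (u : ι → ℂ) (v : κ → ℂ) : ι × κ → ℂ := fun p => u p.1 * v p.2

/-- The depolarizing map Φ_q[X] = qX + (1−q) tr(X) I/d. -/
def depol (d : ℕ) (q : ℝ) (X : Matrix (Fin d) (Fin d) ℂ) : Matrix (Fin d) (Fin d) ℂ :=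
  (q : ℂ) • X + ((1 - q : ℝ) : ℂ) • X.trace • ((d : ℂ)⁻¹ • (1 : Matrix (Fin d) (Fin d) ℂ))

/-- The Schmidt-rank-2 input state |ψ⟩ = (|11⟩ + |22⟩)/√2 of two qutrits. -/
def psiTwo : Fin 3 × Fin 3 → ℂ :=
  fun p => if (p.1 = 0 ∧ p.2 = 0) ∨ (p.1 = 1 ∧ p.2 = 1)
    then (((Real.sqrt 2)⁻¹ : ℝ) : ℂ) else 0

-- aux: PSD of rank-one
lemma psd_vecMulVec {n : Type*} [Fintype n] (v : n → ℂ) :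
    (vecMulVec v (star v)).PosSemidef := by
  have h : vecMulVec v (star v) = (Matrix.replicateRow Unit (star v))ᴴ * Matrix.replicateRow Unit (star v) := by
    ext i j
    simp [Matrix.vecMulVec_apply, Matrix.mul_apply, Matrix.replicateRow_apply, Matrix.conjTranspose_apply]
  rw [h]
  exact Matrix.posSemidef_conjTranspose_mul_self _

lemma psd_add {n : Type*} [Fintype n] {A B : Matrix n n ℂ}
    (hA : A.PosSemidef) (hB : B.PosSemidef) : (A + B).PosSemidef := by
  refine Matrix.PosSemidef.of_dotProduct_mulVec_nonneg (hA.1.add hB.1) fun x => ?_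
  rw [Matrix.add_mulVec, dotProduct_add]
  exact add_nonneg (hA.dotProduct_mulVec_nonneg x) (hB.dotProduct_mulVec_nonneg x)
lemma notPSD : ¬ (ptB (choi (depol 3 (2/5)))).PosSemidef := by
  intro h
  have := h.dotProduct_mulVec_nonneg (fun p : Fin 3 × Fin 3 => if p = (0,1) then (1 : ℂ) else if p = (1,0) then -1 else 0)
  simp only [dotProduct, Matrix.mulVec, ptB, choi, amplify, maxEntProj, depol, Matrix.trace,
    Matrix.diag, Fintype.sum_prod_type, Fin.sum_univ_three, Matrix.of_apply, Matrix.one_apply,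
    Matrix.add_apply, Matrix.smul_apply, smul_eq_mul, Pi.star_apply, Fintype.card_fin,
    Prod.mk.injEq] at this
  norm_num [Complex.le_def, show (0:Fin 3) ≠ 1 by decide, show (1:Fin 3) ≠ 0 by decide,
    show (2:Fin 3) ≠ 1 by decide, show (2:Fin 3) ≠ 0 by decide, show (0:Fin 3) ≠ 2 by decide,
    show (1:Fin 3) ≠ 2 by decide] at this
lemma maxEnt_state : IsState (maxEntProj (Fin 3)) := by
  constructor
  · have h : maxEntProj (Fin 3) = vecMulVec (fun p : Fin 3 × Fin 3 =>
        if p.1 = p.2 then ((Real.sqrt 3)⁻¹ : ℂ) else 0)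
        (star fun p : Fin 3 × Fin 3 => if p.1 = p.2 then ((Real.sqrt 3)⁻¹ : ℂ) else 0) := by
      ext ⟨a, b⟩ ⟨c, d⟩
      simp only [maxEntProj, Matrix.vecMulVec_apply, Matrix.of_apply, Pi.star_apply,
        Fintype.card_fin]
      split_ifs with h1 h2 h3 h4 h5 <;>
        simp_all [Complex.ext_iff, ← Complex.ofReal_inv, ← Complex.ofReal_mul,
          ← mul_inv, Real.mul_self_sqrt]
    rw [h]; exact psd_vecMulVec _
  · simp [Matrix.trace, Matrix.diag, maxEntProj, Fintype.sum_prod_type, Fin.sum_univ_three,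
      show (0:Fin 3) ≠ 1 by decide, show (1:Fin 3) ≠ 0 by decide,
      show (2:Fin 3) ≠ 1 by decide, show (2:Fin 3) ≠ 0 by decide,
      show (0:Fin 3) ≠ 2 by decide, show (1:Fin 3) ≠ 2 by decide]
/-- diagonal part of the PPT decomposition -/
def Dd : Fin 3 × Fin 3 → ℂ := fun p =>
  if p = (0,0) ∨ p = (1,1) then 5/25 else
  if p = (0,1) ∨ p = (1,0) ∨ p = (2,2) then 1/25 else 2/25

/-- rank-one part -/
def wV : Fin 3 × Fin 3 → ℂ := fun p =>
  if p = (0,1) ∨ p = (1,0) then ((Real.sqrt 2 : ℝ) : ℂ)/5 else 0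

set_option maxHeartbeats 2000000 in
lemma key_decomp : ptB (tensorMap (depol 3 (2/5)) (depol 3 (2/5)) (vecMulVec psiTwo (star psiTwo)))
    = Matrix.diagonal Dd + vecMulVec wV (star wV) := by
  have h2 : (Real.sqrt 2) * (Real.sqrt 2) = 2 := Real.mul_self_sqrt (by norm_num)
  ext ⟨a, b⟩ ⟨c, d⟩
  fin_cases a <;> fin_cases b <;> fin_cases c <;> fin_cases d <;>
  · simp only [ptB, tensorMap, amplify, amplifyL, depol, psiTwo, Matrix.vecMulVec_apply,
      Matrix.trace, Matrix.diag, Fin.sum_univ_three, Matrix.of_apply, Matrix.one_apply,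
      Matrix.add_apply, Matrix.smul_apply, smul_eq_mul, Pi.star_apply, Matrix.diagonal_apply,
      Dd, wV, Prod.mk.injEq, Fin.isValue]
    simp [Complex.ext_iff, h2]
    all_goals ring_nf
    all_goals norm_num [Real.sq_sqrt, h2]
lemma Dd_nonneg : (0 : (Fin 3 × Fin 3) → ℂ) ≤ Dd := by
  intro p
  simp only [Dd, Pi.zero_apply]
  split_ifs <;> norm_num [Complex.le_def]

/-- the gap at q = 0.4 ∈ (1/4, (1+√3)/(4+√3)): the Choi operator of the
qutrit depolarizing channel is not PPT (so Φ_q ⊗ Id is not PPT-inducing), yet the output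
of Φ_q ⊗ Φ_q on the rank-2 maximally entangled input is PPT. -/
theorem depol_gap :
    (1 / 4 : ℝ) < 2 / 5 ∧ (2 / 5 : ℝ) < (1 + Real.sqrt 3) / (4 + Real.sqrt 3) ∧
    ¬ (ptB (choi (depol 3 (2 / 5)))).PosSemidef ∧
    ¬ (∀ ρ : Matrix (Fin 3 × Fin 3) (Fin 3 × Fin 3) ℂ, IsState ρ →
        (ptB (amplify (depol 3 (2 / 5)) ρ)).PosSemidef) ∧
    (ptB (tensorMap (depol 3 (2 / 5)) (depol 3 (2 / 5))
      (vecMulVec psiTwo (star psiTwo)))).PosSemidef := by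
  have hs : (1 : ℝ) < Real.sqrt 3 := by
    rw [show (1:ℝ) = Real.sqrt 1 by simp]
    exact Real.sqrt_lt_sqrt (by norm_num) (by norm_num)
  refine ⟨by norm_num, ?_, notPSD, ?_, ?_⟩
  · rw [lt_div_iff₀ (by positivity)]
    nlinarith [Real.sqrt_nonneg 3]
  · intro h
    exact notPSD (h (maxEntProj (Fin 3)) maxEnt_state)
  · rw [key_decomp]
    exact psd_add (Matrix.PosSemidef.diagonal Dd_nonneg) (psd_vecMulVec _)
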